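/- The existential fragment of S1S over (∈, s) is strictly less expressive than full S1S over (∈, s): there is a language (e.g., the set of characteristic words of infinite subsets of ℕ) definable in S1S over (∈, s) but not definable by any existential S1S formula over (∈, s). -/

import Mathlib

structure Automaton (σ : Type) where
  Q : Type
  fin : Fintype Q
  Δ : Q → σ → Q → Prop
  q0 : Q
  F : Set Q

def Automaton.IsRun {σ : Type} (A : Automaton σ) (α : ℕ → σ) (ρ : ℕ → A.Q) : Prop :=
  ρ 0 = A.q0 ∧ ∀ i, A.Δ (ρ i) (α i) (ρ (i + 1))

def Automaton.BuchiAccepts {σ : Type} (A : Automaton σ) (α : ℕ → σ) : Prop :=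
  ∃ ρ, A.IsRun α ρ ∧ {i | ρ i ∈ A.F}.Infinite

def Automaton.CoBuchiAccepts {σ : Type} (A : Automaton σ) (α : ℕ → σ) : Prop :=
  ∃ ρ, A.IsRun α ρ ∧ {i | ρ i ∉ A.F}.Finite

def BuchiRecognisable {σ : Type} (L : Set (ℕ → σ)) : Prop :=
  ∃ A : Automaton σ, L = {α | A.BuchiAccepts α}

def CoBuchiRecognisable {σ : Type} (L : Set (ℕ → σ)) : Prop :=
  ∃ A : Automaton σ, L = {α | A.CoBuchiAccepts α}

inductive S1S : Type
  | atom (k x X : ℕ) : S1S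
  | not : S1S → S1S
  | and : S1S → S1S → S1S
  | exFO (x : ℕ) : S1S → S1S
  | exSO (X : ℕ) : S1S → S1S

def S1S.Sat (v : ℕ → ℕ) (A : ℕ → Set ℕ) : S1S → Prop
  | atom k x X => v x + k ∈ A X
  | .not φ => ¬ φ.Sat v A
  | .and φ ψ => φ.Sat v A ∧ ψ.Sat v A
  | exFO x φ => ∃ b : ℕ, φ.Sat (Function.update v x b) A
  | exSO X φ => ∃ B : Set ℕ, φ.Sat v (Function.update A X B)

/-- `φ` is purely first-order: no second-order quantifiers occur. -/
def S1S.FirstOrder : S1S → Prop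
  | atom _ _ _ => True
  | .not φ => φ.FirstOrder
  | .and φ ψ => φ.FirstOrder ∧ ψ.FirstOrder
  | exFO _ φ => φ.FirstOrder
  | exSO _ _ => False

/-- Existential fragment: a block of second-order existentials over a first-order matrix. -/
inductive S1S.ExFrag : S1S → Prop
  | fo {φ : S1S} : φ.FirstOrder → ExFrag φ
  | ex {φ : S1S} (X : ℕ) : ExFrag φ → ExFrag (S1S.exSO X φ)

/-- The sets `X_0, …, X_{m-1}` encoded by the characteristic word `α`. -/
def setsOf (m : ℕ) (α : ℕ → (Fin m → Bool)) : ℕ → Set ℕ :=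
  fun X => {i | ∃ h : X < m, α i ⟨X, h⟩ = true}

/-- `φ` (a sentence with free set variables among `X_0, …, X_{m-1}`) defines the language `L`:
its truth value depends only on the first `m` set variables (and on no first-order valuation),
and `L` is exactly the set of characteristic words of its models. -/
def Defines (m : ℕ) (φ : S1S) (L : Set (ℕ → (Fin m → Bool))) : Prop :=
  (∀ v v' : ℕ → ℕ, ∀ A A' : ℕ → Set ℕ, (∀ X, X < m → A X = A' X) →
      (φ.Sat v A ↔ φ.Sat v' A')) ∧
  L = {α | φ.Sat (fun _ => 0) (setsOf m α)}

def S1SDefinable (m : ℕ) (L : Set (ℕ → (Fin m → Bool))) : Prop :=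
  ∃ φ : S1S, Defines m φ L

def ExS1SDefinable (m : ℕ) (L : Set (ℕ → (Fin m → Bool))) : Prop :=
  ∃ φ : S1S, φ.ExFrag ∧ Defines m φ L

open Classical

/-! ### Part 1: infinitude is S1S-definable -/

def psiLe : S1S :=
  .not (.exSO 1 (.and (.atom 0 0 1)
    (.and (.not (.exFO 2 (.and (.atom 0 2 1) (.not (.atom 1 2 1)))))
      (.not (.atom 0 1 1)))))

def phiInf : S1S :=
  .not (.exFO 0 (.not (.exFO 1 (.and psiLe (.atom 0 1 0)))))

lemma psiLe_sat (v : ℕ → ℕ) (A : ℕ → Set ℕ) : psiLe.Sat v A ↔ v 0 ≤ v 1 := by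
  simp only [psiLe, S1S.Sat, Function.update_self, Function.update_of_ne,
    Nat.add_zero, not_exists, not_and, not_not]
  constructor
  · intro h
    by_contra hlt
    push_neg at hlt
    have := h (Set.Ici (v 0))
    simp only [Set.mem_Ici] at this
    exact absurd (this le_rfl fun x hx => by omega) (by omega)
  · intro hle B hmem hcl
    exact Nat.le_induction hmem (fun n _ ih => hcl n ih) (v 1) hle

lemma infinite_iff (s : Set ℕ) : s.Infinite ↔ ∀ b, ∃ c, b ≤ c ∧ c ∈ s := by
  constructor
  · intro h b
    by_contra hc
    push_neg at hc
    exact h ((Set.finite_Iio b).subset fun c hcs => by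
      simp only [Set.mem_Iio]
      by_contra hb
      exact hc c (le_of_not_gt hb) hcs)
  · intro h hfin
    obtain ⟨b, hb⟩ := hfin.bddAbove
    obtain ⟨c, hbc, hcs⟩ := h (b + 1)
    exact absurd (hb hcs) (by omega)

lemma phiInf_sat (v : ℕ → ℕ) (A : ℕ → Set ℕ) : phiInf.Sat v A ↔ (A 0).Infinite := by
  rw [infinite_iff]
  have step : ∀ b c : ℕ,
      psiLe.Sat (Function.update (Function.update v 0 b) 1 c) A ↔ b ≤ c := by
    intro b c
    rw [psiLe_sat]
    simp [Function.update_apply]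
  have unf : phiInf.Sat v A ↔
      ¬ ∃ b : ℕ, ¬ ∃ c : ℕ,
        (psiLe.Sat (Function.update (Function.update v 0 b) 1 c) A ∧
          Function.update (Function.update v 0 b) 1 c 1 + 0 ∈ A 0) := Iff.rfl
  rw [unf]
  push_neg
  constructor
  · intro h b
    obtain ⟨c, hc1, hc2⟩ := h b
    rw [step] at hc1
    simp [Function.update_self] at hc2
    exact ⟨c, hc1, hc2⟩
  · intro h b
    obtain ⟨c, hbc, hcs⟩ := h b
    exact ⟨c, by rw [step]; exact hbc, by simpa [Function.update_self] using hcs⟩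

/-! ### Part 2 machinery -/

def S1S.bX : S1S → ℕ
  | atom _ _ X => X
  | .not φ => φ.bX
  | .and φ ψ => max φ.bX ψ.bX
  | exFO _ φ => φ.bX
  | exSO X φ => max X φ.bX

def S1S.bK : S1S → ℕ
  | atom k _ _ => k
  | .not φ => φ.bK
  | .and φ ψ => max φ.bK ψ.bK
  | exFO _ φ => φ.bK
  | exSO _ φ => φ.bK

lemma fo_inv (N K : ℕ) (A A' : ℕ → Set ℕ)
    (h1 : ∀ n, ∃ n', ∀ X, X ≤ N → ∀ k, k ≤ K → ((n + k ∈ A X) ↔ (n' + k ∈ A' X)))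
    (h2 : ∀ n', ∃ n, ∀ X, X ≤ N → ∀ k, k ≤ K → ((n + k ∈ A X) ↔ (n' + k ∈ A' X))) :
    ∀ (ψ : S1S), ψ.FirstOrder → ψ.bX ≤ N → ψ.bK ≤ K →
    ∀ v v', (∀ x X, X ≤ N → ∀ k, k ≤ K → ((v x + k ∈ A X) ↔ (v' x + k ∈ A' X))) →
    (ψ.Sat v A ↔ ψ.Sat v' A') := by
  intro ψ
  induction ψ with
  | atom k x X =>
    intro _ hbX hbK v v' h3
    exact h3 x X hbX k hbK
  | not φ ih =>
    intro hfo hbX hbK v v' h3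
    simp only [S1S.Sat]
    rw [ih hfo hbX hbK v v' h3]
  | and φ ψ ih1 ih2 =>
    intro hfo hbX hbK v v' h3
    simp only [S1S.Sat]
    rw [ih1 hfo.1 (le_trans (le_max_left _ _) hbX) (le_trans (le_max_left _ _) hbK) v v' h3,
      ih2 hfo.2 (le_trans (le_max_right _ _) hbX) (le_trans (le_max_right _ _) hbK) v v' h3]
  | exFO x φ ih =>
    intro hfo hbX hbK v v' h3
    simp only [S1S.Sat]
    constructor
    · rintro ⟨b, hb⟩
      obtain ⟨b', hb'⟩ := h1 b
      refine ⟨b', (ih hfo hbX hbK _ _ ?_).mp hb⟩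
      intro y X hX k hK
      by_cases hy : y = x
      · subst hy
        rw [Function.update_self, Function.update_self]
        exact hb' X hX k hK
      · rw [Function.update_of_ne hy, Function.update_of_ne hy]
        exact h3 y X hX k hK
    · rintro ⟨b', hb'⟩
      obtain ⟨b, hb⟩ := h2 b'
      refine ⟨b, (ih hfo hbX hbK _ _ ?_).mpr hb'⟩
      intro y X hX k hK
      by_cases hy : y = x
      · subst hy
        rw [Function.update_self, Function.update_self]
        exact hb X hX k hK
      · rw [Function.update_of_ne hy, Function.update_of_ne hy]
        exact h3 y X hX k hK
  | exSO X φ ih =>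
    intro hfo
    exact hfo.elim

lemma peel {φ : S1S} (h : φ.ExFrag) :
    ∃ (ψ : S1S) (l : List ℕ), ψ.FirstOrder ∧ ψ.bX ≤ φ.bX ∧ ψ.bK ≤ φ.bK ∧
    ∀ v A, (φ.Sat v A ↔ ∃ B : ℕ → Set ℕ, ψ.Sat v (fun X => if X ∈ l then B X else A X)) := by
  induction h with
  | @fo φ hfo =>
    refine ⟨φ, [], hfo, le_refl _, le_refl _, fun v A => ?_⟩
    have he : ∀ B : ℕ → Set ℕ, (fun X => if X ∈ ([] : List ℕ) then B X else A X) = A :=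
      fun B => funext fun X => by simp
    constructor
    · intro h; exact ⟨fun _ => ∅, by rw [he]; exact h⟩
    · rintro ⟨B, hB⟩; rw [he] at hB; exact hB
  | @ex φ X hfrag ih =>
    obtain ⟨ψ, l, hfo, hbX, hbK, hiff⟩ := ih
    refine ⟨ψ, X :: l, hfo, le_trans hbX (le_max_right _ _), hbK, fun v A => ?_⟩
    simp only [S1S.Sat]
    constructor
    · rintro ⟨B₀, hB₀⟩
      obtain ⟨B, hB⟩ := (hiff v _).mp hB₀
      refine ⟨fun Y => if Y ∈ l then B Y else B₀, ?_⟩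
      have he : (fun Y => if Y ∈ X :: l then (if Y ∈ l then B Y else B₀) else A Y)
          = (fun Y => if Y ∈ l then B Y else Function.update A X B₀ Y) := by
        funext Y
        by_cases h1 : Y ∈ l
        · simp [h1, List.mem_cons]
        · by_cases h2 : Y = X
          · subst h2
            simp [h1, Function.update_self]
          · simp [h1, h2, Function.update_of_ne h2]
      rw [he]
      exact hB
    · rintro ⟨C, hC⟩
      refine ⟨C X, (hiff v _).mpr ⟨C, ?_⟩⟩
      have he : (fun Y => if Y ∈ l then C Y else Function.update A X (C X) Y)
          = (fun Y => if Y ∈ X :: l then C Y else A Y) := by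
        funext Y
        by_cases h1 : Y ∈ l
        · simp [h1, List.mem_cons]
        · by_cases h2 : Y = X
          · subst h2
            simp [h1, Function.update_self]
          · simp [h1, h2, Function.update_of_ne h2]
      rw [he]
      exact hC

lemma not_exdef :
    ¬ ExS1SDefinable 1 {α : ℕ → (Fin 1 → Bool) | {i | α i 0 = true}.Infinite} := by
  rintro ⟨φ, hex, hind, hL⟩
  obtain ⟨ψ, l, hfo, hbX, hbK, hiff⟩ := peel hex
  by_cases h0 : (0 : ℕ) ∈ l
  · -- the variable X₀ is overwritten: truth cannot depend on the word
    have hsets : ∀ B : ℕ → Set ℕ,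
        (fun X => if X ∈ l then B X else setsOf 1 (fun _ _ => true) X)
          = (fun X => if X ∈ l then B X else setsOf 1 (fun _ _ => false) X) := by
      intro B
      funext X
      by_cases hXl : X ∈ l
      · simp [hXl]
      · have hX0 : X ≠ 0 := fun h => hXl (h ▸ h0)
        simp only [hXl, if_false]
        ext i
        simp only [setsOf, Set.mem_setOf_eq]
        constructor
        · rintro ⟨h, -⟩; omega
        · rintro ⟨h, -⟩; omega
    have hmem : (fun _ _ => true) ∈ {α : ℕ → (Fin 1 → Bool) | {i | α i 0 = true}.Infinite} := by
      simp [Set.infinite_univ]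
    rw [hL] at hmem
    obtain ⟨B, hB⟩ := (hiff _ _).mp hmem
    rw [hsets B] at hB
    have hmem' : (fun _ _ => false) ∈ {α : ℕ → (Fin 1 → Bool) | {i | α i 0 = true}.Infinite} := by
      rw [hL]
      exact (hiff _ _).mpr ⟨B, hB⟩
    simp at hmem'
  · -- the genuine case
    set v₀ : ℕ → ℕ := fun _ => 0 with hv₀
    set α : ℕ → Fin 1 → Bool := fun i _ => decide (∃ j : ℕ, i = 2 ^ j) with hα
    have hαmem : α ∈ {α : ℕ → (Fin 1 → Bool) | {i | α i 0 = true}.Infinite} := by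
      have : {i : ℕ | α i 0 = true} = Set.range (fun j : ℕ => 2 ^ j) := by
        ext i
        simp [hα, Set.range, eq_comm]
      simp only [Set.mem_setOf_eq, this]
      exact Set.infinite_range_of_injective (Nat.pow_right_injective (le_refl 2))
    have hsat : φ.Sat v₀ (setsOf 1 α) := by rw [hL] at hαmem; exact hαmem
    obtain ⟨B, hψ⟩ := (hiff v₀ (setsOf 1 α)).mp hsat
    set Astar : ℕ → Set ℕ := fun X => if X ∈ l then B X else setsOf 1 α X with hAstar
    set N := ψ.bX with hN
    set K := ψ.bK with hK
    set τ : ℕ → Fin (N+1) → Fin (K+1) → Bool :=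
      fun n X k => decide (n + (k : ℕ) ∈ Astar (X : ℕ)) with hτ
    -- all realized types occur early
    have hfin : (Set.range τ).Finite := Set.toFinite _
    set M := hfin.toFinset.sup (fun t => if h : ∃ m, τ m = t then Nat.find h else 0) with hMdef
    have hM : ∀ n, ∃ m, m ≤ M ∧ τ m = τ n := by
      intro n
      have hmem : τ n ∈ hfin.toFinset := by simp [Set.Finite.mem_toFinset]
      have hex2 : ∃ m, τ m = τ n := ⟨n, rfl⟩
      refine ⟨Nat.find hex2, ?_, Nat.find_spec hex2⟩
      have := Finset.le_sup (f := fun t => if h : ∃ m, τ m = t then Nat.find h else 0) hmem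
      simpa only [dif_pos hex2] using this
    set C := 2 ^ ((K+1) * (N+1)) with hC
    set G := (C+1) * (K+1) with hG
    obtain ⟨j, hj⟩ : ∃ j, M + G + K + 1 < 2 ^ j := ⟨_, Nat.lt_two_pow_self⟩
    set s₀ := 2 ^ j + 1 with hs₀
    have hgap : ∀ p, s₀ ≤ p → p ≤ s₀ + G + K → p ∉ setsOf 1 α 0 := by
      intro p hp1 hp2 hmem
      obtain ⟨h1, h2⟩ := hmem
      rw [hα] at h2
      simp only [decide_eq_true_eq] at h2
      obtain ⟨m, rfl⟩ := h2
      have hjm : j < m := by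
        have h2j : 2 ^ j < 2 ^ m := by omega
        exact (Nat.pow_lt_pow_iff_right (by norm_num)).mp h2j
      have : 2 ^ (j+1) ≤ 2 ^ m := Nat.pow_le_pow_right (by norm_num) (by omega)
      have h2j1 : 2 ^ (j+1) = 2 * 2 ^ j := by ring
      omega
    -- pigeonhole for types
    have hcard : Fintype.card (Fin (N+1) → Fin (K+1) → Bool) < Fintype.card (Fin (C+1)) := by
      rw [Fintype.card_fun, Fintype.card_fun]
      simp only [Fintype.card_bool, Fintype.card_fin, hC]
      rw [← pow_mul]
      omega
    obtain ⟨a, b, hne, hab⟩ := Fintype.exists_ne_map_eq_of_card_lt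
      (fun i : Fin (C+1) => τ (s₀ + (i : ℕ) * (K+1))) hcard
    have key : ∀ a b : Fin (C+1), (a : ℕ) < (b : ℕ) →
        τ (s₀ + (a : ℕ) * (K+1)) = τ (s₀ + (b : ℕ) * (K+1)) → False := by
      intro a b hlt hττ
      set n₀ := s₀ + (a : ℕ) * (K+1) with hn₀
      set n₁ := s₀ + (b : ℕ) * (K+1) with hn₁
      set d := n₁ - n₀ with hd
      have hdval : d = ((b : ℕ) - (a : ℕ)) * (K+1) := by
        rw [hd, hn₀, hn₁, Nat.sub_mul]
        omega
      have hdK : K + 1 ≤ d := by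
        rw [hdval]
        calc K + 1 = 1 * (K+1) := (one_mul _).symm
        _ ≤ ((b : ℕ) - (a : ℕ)) * (K+1) := Nat.mul_le_mul_right _ (by omega)
      have hn₁G : n₁ ≤ s₀ + G := by
        rw [hn₁, hG]
        have : (b : ℕ) ≤ C := by omega
        have h5 := Nat.mul_le_mul_right (K+1) this
        have h6 := Nat.mul_le_mul_right (K+1) (show C ≤ C+1 by omega)
        omega
      have hwin : ∀ X, X ≤ N → ∀ k, k ≤ K → ((n₀ + k ∈ Astar X) ↔ (n₁ + k ∈ Astar X)) := by
        intro X hX k hk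
        have := congrFun (congrFun hττ ⟨X, by omega⟩) ⟨k, by omega⟩
        simpa only [hτ, decide_eq_decide] using this
      set f : ℕ → ℕ := fun p => if p < n₀ then p else n₀ + (p - n₀) % d with hf
      have hM_lt : M + K < n₀ := by
        have : M + G + K + 1 < 2 ^ j := hj
        omega
      have hK_lt : K < n₀ := by omega
      have hf_small : ∀ p, p < n₀ → f p = p := fun p hp => if_pos hp
      have hf_ge : ∀ p, n₀ ≤ p → f p = n₀ + (p - n₀) % d := fun p hp => if_neg (by omega)
      have hf_lt : ∀ p, f p < n₁ := by
        intro p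
        by_cases hp : p < n₀
        · rw [hf_small p hp]; omega
        · rw [hf_ge p (by omega)]
          have := Nat.mod_lt (p - n₀) (show 0 < d by omega)
          omega
      have hf_ge' : ∀ p, n₀ ≤ p → n₀ ≤ f p := by
        intro p hp; rw [hf_ge p hp]; omega
      have hshift : ∀ p k, k ≤ K → ∀ X, X ≤ N → ((f (p + k) ∈ Astar X) ↔ (f p + k ∈ Astar X)) := by
        intro p k hk X hX
        by_cases hp1 : p + k < n₀
        · rw [hf_small _ hp1, hf_small p (by omega)]
        · by_cases hp2 : p < n₀
          · have h1 : p + k - n₀ < d := by omega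
            rw [hf_small p hp2, hf_ge _ (by omega), Nat.mod_eq_of_lt h1]
            have : n₀ + (p + k - n₀) = p + k := by omega
            rw [this]
          · set r := (p - n₀) % d with hr
            have hrd : r < d := Nat.mod_lt _ (by omega)
            have hmod : (p + k - n₀) % d = (r + k) % d := by
              have h1 : p + k - n₀ = (p - n₀) + k := by omega
              rw [h1, ← Nat.mod_add_mod]
            rw [hf_ge p (by omega), hf_ge (p + k) (by omega), hmod]
            by_cases hrk : r + k < d
            · rw [Nat.mod_eq_of_lt hrk]
              have : n₀ + (r + k) = n₀ + r + k := by omega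
              rw [this]
            · have hmod2 : (r + k) % d = r + k - d := by
                rw [Nat.mod_eq_sub_mod (by omega)]
                exact Nat.mod_eq_of_lt (by omega)
              rw [hmod2]
              have hq : r + k - d ≤ K := by omega
              have h1 : n₀ + (r + k - d) = n₀ + (r + k - d) := rfl
              have h2 : n₀ + r + k = n₁ + (r + k - d) := by omega
              rw [h2]
              exact hwin X hX _ hq
      set A' : ℕ → Set ℕ := fun X => {p | f p ∈ Astar X} with hA'
      have hwinmem : ∀ m n, τ m = τ n → ∀ X, X ≤ N → ∀ k, k ≤ K →
          ((m + k ∈ Astar X) ↔ (n + k ∈ Astar X)) := by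
        intro m n hmn X hX k hk
        have := congrFun (congrFun hmn ⟨X, by omega⟩) ⟨k, by omega⟩
        simpa only [hτ, decide_eq_decide] using this
      have hinv : ψ.Sat v₀ Astar ↔ ψ.Sat v₀ A' := by
        apply fo_inv N K Astar A'
        · -- H1
          intro n
          obtain ⟨m, hmM, hmτ⟩ := hM n
          refine ⟨m, fun X hX k hk => ?_⟩
          have h1 : (m + k ∈ Astar X) ↔ (n + k ∈ Astar X) := hwinmem m n hmτ X hX k hk
          have h2 : m + k ∈ A' X ↔ m + k ∈ Astar X := by
            rw [hA']
            simp only [Set.mem_setOf_eq]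
            rw [hf_small (m + k) (by omega)]
          rw [h2, h1]
        · -- H2
          intro n'
          refine ⟨f n', fun X hX k hk => ?_⟩
          have h2 : n' + k ∈ A' X ↔ f (n' + k) ∈ Astar X := Iff.rfl
          rw [h2, hshift n' k hk X hX]
        · exact hfo
        · exact le_refl _
        · exact le_refl _
        · -- H3
          intro x X hX k hk
          have hv : v₀ x = 0 := rfl
          rw [hv]
          have h2 : 0 + k ∈ A' X ↔ f (0 + k) ∈ Astar X := Iff.rfl
          rw [h2, hf_small (0 + k) (by omega)]
      have hψ' : ψ.Sat v₀ A' := hinv.mp hψ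
      set α' : ℕ → Fin 1 → Bool := fun p _ => decide (p ∈ A' 0) with hα'
      have hA'eq : (fun X => if X ∈ l then A' X else setsOf 1 α' X) = A' := by
        funext X
        by_cases hXl : X ∈ l
        · simp [hXl]
        · simp only [hXl, if_false]
          by_cases hX0 : X = 0
          · subst hX0
            ext i
            simp only [setsOf, Set.mem_setOf_eq, hα', decide_eq_true_eq]
            constructor
            · rintro ⟨h, hh⟩; exact hh
            · intro h; exact ⟨by omega, h⟩
          · ext i
            simp only [setsOf, Set.mem_setOf_eq, hA']
            constructor
            · rintro ⟨h, -⟩; omega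
            · intro h
              exfalso
              have : Astar X = setsOf 1 α X := by rw [hAstar]; simp [hXl]
              rw [this] at h
              obtain ⟨h4, -⟩ := h
              omega
      have hsat' : φ.Sat v₀ (setsOf 1 α') :=
        (hiff v₀ _).mpr ⟨A', by rw [hA'eq]; exact hψ'⟩
      have hα'mem : α' ∈ {α : ℕ → (Fin 1 → Bool) | {i | α i 0 = true}.Infinite} := by
        rw [hL]; exact hsat'
      simp only [Set.mem_setOf_eq] at hα'mem
      apply hα'mem
      apply (Set.finite_Iio n₀).subset
      intro p hp
      simp only [hα', decide_eq_true_eq] at hp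
      simp only [Set.mem_Iio]
      by_contra hpn
      push_neg at hpn
      have h1 : f p ∈ Astar 0 := hp
      have h2 : Astar 0 = setsOf 1 α 0 := by rw [hAstar]; simp [h0]
      rw [h2] at h1
      exact hgap (f p) (by have := hf_ge' p hpn; omega) (by have := hf_lt p; omega) h1
    rcases lt_or_gt_of_ne hne with h | h
    · exact key a b h hab
    · exact key b a h hab.symm

lemma setsOf_zero (α : ℕ → Fin 1 → Bool) : setsOf 1 α 0 = {i | α i 0 = true} := by
  ext i
  simp only [setsOf, Set.mem_setOf_eq]
  constructor
  · rintro ⟨h, hh⟩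
    exact hh
  · intro h
    exact ⟨by omega, h⟩

/-- The existential fragment of S1S over `(∈, s)` is strictly less expressive than full
S1S over `(∈, s)`: the set of characteristic words of infinite subsets of ℕ is definable
in full S1S but not in the existential fragment. -/
theorem exS1S_strictly_weaker :
    S1SDefinable 1 {α : ℕ → (Fin 1 → Bool) | {i | α i 0 = true}.Infinite} ∧
    ¬ ExS1SDefinable 1 {α : ℕ → (Fin 1 → Bool) | {i | α i 0 = true}.Infinite} := by
  constructor
  · refine ⟨phiInf, ?_, ?_⟩
    · intro v v' A A' h
      rw [phiInf_sat, phiInf_sat, h 0 (by omega)]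
    · ext α
      simp only [Set.mem_setOf_eq, phiInf_sat, setsOf_zero]
  · exact not_exdef
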